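/- Γ-switchable homomorphisms compose: if G admits a Γ-switchable homomorphism to H and H admits a Γ-switchable homomorphism to K, then G admits a Γ-switchable homomorphism to K. -/

import Mathlib

open Equiv

/-- An `(m,n)`-mixed graph (with labelled vertex set `V`): `edge u v = some i` records an
edge `uv` of colour `i` (stored symmetrically) and `arc u v = some j` records an arc from
`u` to `v` of colour `j`. -/
structure Mixed (V : Type) (m n : ℕ) where
  edge : V → V → Option (Fin m)
  arc : V → V → Option (Fin n)

/-- An element of the switching group `S_m × (S_n ⋉ S_2ⁿ)`: a permutation `α` of the edge
colours together with a permutation `σ` of (arc colour, arc direction) pairs; a pair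
`(i, b)` records an arc of colour `i` whose direction agrees (`b = true`) or disagrees
(`b = false`) with a reference orientation. -/
abbrev SwElt (m n : ℕ) := Perm (Fin m) × Perm (Fin n × Bool)

/-- The permutation `σ` of (arc colour, direction) pairs comes from a pair
`(β, γ₁, …, γₙ) ∈ S_n × S_2ⁿ`, i.e. the new arc colour does not depend on the direction:
`σ (i, d) = (β i, γᵢ d)`. -/
def Consistent {n : ℕ} (σ : Perm (Fin n × Bool)) : Prop :=
  ∀ i : Fin n, (σ (i, true)).1 = (σ (i, false)).1

/-- Given the arc entries `a = arc x y` and `b = arc y x`, the new entry `arc x y`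
after acting by `σ` on (colour, direction relative to `(x,y)`) pairs. -/
def arcSwitch {n : ℕ} (σ : Perm (Fin n × Bool)) (a b : Option (Fin n)) : Option (Fin n) :=
  match a with
  | some i => if (σ (i, true)).2 = true then some (σ (i, true)).1 else none
  | none =>
    match b with
    | some i => if (σ (i, false)).2 = true then some (σ (i, false)).1 else none
    | none => none

/-- Switching the mixed graph `G` at the vertex `v` with respect to `π`: edge colours of
incident edges change by `π.1`, and colours and directions of incident arcs change by
`π.2`. -/
def Mixed.switch {V : Type} [DecidableEq V] {m n : ℕ} (G : Mixed V m n) (v : V)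
    (π : SwElt m n) : Mixed V m n where
  edge x y := if x = v ∨ y = v then (G.edge x y).map π.1 else G.edge x y
  arc x y := if x = v ∨ y = v then arcSwitch π.2 (G.arc x y) (G.arc y x) else G.arc x y

/-- Switching with respect to a sequence of (vertex, group element) pairs, in order. -/
def Mixed.switchSeq {V : Type} [DecidableEq V] {m n : ℕ} (G : Mixed V m n) :
    List (V × SwElt m n) → Mixed V m n
  | [] => G
  | (v, π) :: rest => (G.switch v π).switchSeq rest

/-- All group elements occurring in the sequence belong to `Γ`. -/
def MValid {V : Type} {m n : ℕ} (Γ : Subgroup (SwElt m n))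
    (L : List (V × SwElt m n)) : Prop :=
  ∀ p ∈ L, p.2 ∈ Γ

/-- `G` is a bona fide mixed graph: loop-free, edges stored symmetrically, and any pair
of vertices is joined by at most one edge or one arc (but not both). -/
def Mixed.Proper {V : Type} {m n : ℕ} (G : Mixed V m n) : Prop :=
  (∀ x, G.edge x x = none) ∧ (∀ x, G.arc x x = none) ∧
  (∀ x y, G.edge x y = G.edge y x) ∧
  (∀ x y, (G.edge x y).isSome → G.arc x y = none ∧ G.arc y x = none) ∧
  (∀ x y, (G.arc x y).isSome → G.arc y x = none)

/-- A homomorphism of `(m,n)`-mixed graphs: preserves edges with their colours, and arcs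
with their colours and directions. -/
def MHom {V W : Type} {m n : ℕ} (f : V → W) (G : Mixed V m n) (H : Mixed W m n) : Prop :=
  (∀ u v j, G.edge u v = some j → H.edge (f u) (f v) = some j) ∧
  (∀ u v j, G.arc u v = some j → H.arc (f u) (f v) = some j)

/-- A `Γ`-switchable homomorphism of `G` to `H`: a switching sequence on `G` with all
elements in `Γ`, followed by a homomorphism of mixed graphs. -/
def MSwHom {V W : Type} [DecidableEq V] {m n : ℕ} (Γ : Subgroup (SwElt m n))
    (G : Mixed V m n) (H : Mixed W m n) : Prop :=
  ∃ L, MValid Γ L ∧ ∃ f : V → W, MHom f (G.switchSeq L) H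

/-- The (colour, direction) state of the pair `(u,v)` of vertices: `some (i, true)` if
there is an arc `u → v` of colour `i`, `some (i, false)` if there is an arc `v → u` of
colour `i`. -/
def arcPair {V : Type} {m n : ℕ} (G : Mixed V m n) (u v : V) : Option (Fin n × Bool) :=
  match G.arc u v with
  | some i => some (i, true)
  | none => (G.arc v u).map (fun i => (i, false))


/-- The invariant we maintain on the target graph: loop-free and no double arcs. -/
def PGood {W : Type} {m n : ℕ} (H : Mixed W m n) : Prop :=
  (∀ x, H.edge x x = none) ∧ (∀ x, H.arc x x = none) ∧
  (∀ x y, (H.arc x y).isSome → H.arc y x = none)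

lemma arcSwitch_none_none {n : ℕ} (σ : Perm (Fin n × Bool)) :
    arcSwitch σ none none = none := rfl

lemma consis_key {n : ℕ} {σ : Perm (Fin n × Bool)} (hσ : Consistent σ) (i : Fin n) :
    ¬ ((σ (i, true)).2 = true ∧ (σ (i, false)).2 = true) := by
  rintro ⟨h1, h2⟩
  have : σ (i, true) = σ (i, false) := by
    have := hσ i
    apply Prod.ext this (h1.trans h2.symm)
  have := σ.injective this
  simp at this

lemma pgood_switch {W : Type} [DecidableEq W] {m n : ℕ} {H : Mixed W m n}
    (hH : PGood H) {σ : SwElt m n} (hσ : Consistent σ.2) (w : W) :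
    PGood (H.switch w σ) := by
  obtain ⟨he, ha, hd⟩ := hH
  refine ⟨fun x => ?_, fun x => ?_, fun x y hxy => ?_⟩
  · simp [Mixed.switch, he x]
  · simp [Mixed.switch, ha x, arcSwitch_none_none]
  · simp only [Mixed.switch] at hxy ⊢
    by_cases hc : x = w ∨ y = w
    · have hc' : y = w ∨ x = w := hc.symm
      rw [if_pos hc] at hxy
      rw [if_pos hc']
      rcases hax : H.arc x y with _ | i
      · rcases hay : H.arc y x with _ | i
        · simp [arcSwitch, hax, hay] at hxy
        · simp only [arcSwitch, hax, hay] at hxy ⊢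
          by_cases h2 : (σ.2 (i, true)).2 = true
          · have h3 : ¬ (σ.2 (i, false)).2 = true :=
              fun h => consis_key hσ i ⟨h2, h⟩
            rw [if_neg h3] at hxy
            simp at hxy
          · simp [h2]
      · have hay : H.arc y x = none := hd x y (by simp [hax])
        simp only [arcSwitch, hax, hay] at hxy ⊢
        by_cases h2 : (σ.2 (i, true)).2 = true
        · have h3 : ¬ (σ.2 (i, false)).2 = true :=
            fun h => consis_key hσ i ⟨h2, h⟩
          simp [h3]
        · rw [if_neg h2] at hxy
          simp at hxy
    · have hc' : ¬ (y = w ∨ x = w) := fun h => hc h.symm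
      rw [if_neg hc] at hxy
      rw [if_neg hc']
      exact hd x y hxy

/-- Simultaneous switch at all vertices in a list. -/
def Mixed.mswitch {V : Type} [DecidableEq V] {m n : ℕ} (G : Mixed V m n)
    (L : List V) (π : SwElt m n) : Mixed V m n where
  edge x y := if x ∈ L ∨ y ∈ L then (G.edge x y).map π.1 else G.edge x y
  arc x y := if x ∈ L ∨ y ∈ L then arcSwitch π.2 (G.arc x y) (G.arc y x) else G.arc x y

lemma switchSeq_eq_mswitch {V : Type} [DecidableEq V] {m n : ℕ} (π : SwElt m n) :
    ∀ (L : List V) (G : Mixed V m n), L.Nodup →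
    (∀ x y, x ∈ L → y ∈ L → G.edge x y = none ∧ G.arc x y = none) →
    G.switchSeq (L.map (fun u => (u, π))) = G.mswitch L π := by
  intro L
  induction L with
  | nil =>
    intro G _ _
    cases G with
    | mk e a =>
      simp only [List.map_nil, Mixed.switchSeq, Mixed.mswitch]
      congr 1 <;> funext x y <;> simp
  | cons v L' ih =>
    intro G hnd hemp
    have hvL' : v ∉ L' := (List.nodup_cons.mp hnd).1
    have hnd' : L'.Nodup := (List.nodup_cons.mp hnd).2
    simp only [List.map_cons, Mixed.switchSeq]
    have hemp' : ∀ x y, x ∈ L' → y ∈ L' →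
        (G.switch v π).edge x y = none ∧ (G.switch v π).arc x y = none := by
      intro x y hx hy
      have h1 := hemp x y (List.mem_cons_of_mem _ hx) (List.mem_cons_of_mem _ hy)
      have h2 := hemp y x (List.mem_cons_of_mem _ hy) (List.mem_cons_of_mem _ hx)
      simp only [Mixed.switch]
      constructor
      · by_cases hc : x = v ∨ y = v <;> simp [hc, h1.1]
      · by_cases hc : x = v ∨ y = v <;> simp [hc, h1.2, h2.2, arcSwitch_none_none]
    rw [ih (G.switch v π) hnd' hemp']
    cases G with
    | mk e a =>
      simp only [Mixed.mswitch, Mixed.switch]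
      congr 1
      · funext x y
        by_cases hx : x = v
        · subst hx
          by_cases hy' : y ∈ L'
          · have h1 := hemp x y List.mem_cons_self (List.mem_cons_of_mem _ hy')
            have h1e : e x y = none := h1.1
            simp [hy', h1e]
          · by_cases hx' : x ∈ L'
            · exact absurd hx' hvL'
            · simp [hx', hy']
        · by_cases hy : y = v
          · subst hy
            by_cases hx' : x ∈ L'
            · have h1 := hemp x y (List.mem_cons_of_mem _ hx') List.mem_cons_self
              have h1e : e x y = none := h1.1
              simp [hx', h1e]
            · by_cases hy' : y ∈ L'
              · exact absurd hy' hvL'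
              · simp [hx', hy']
          · by_cases hx' : x ∈ L' <;> by_cases hy' : y ∈ L' <;>
              simp [hx, hy, hx', hy', List.mem_cons]
      · funext x y
        by_cases hx : x = v
        · subst hx
          by_cases hy' : y ∈ L'
          · have h1 := hemp x y List.mem_cons_self (List.mem_cons_of_mem _ hy')
            have h2 := hemp y x (List.mem_cons_of_mem _ hy') List.mem_cons_self
            have h1a : a x y = none := h1.2
            have h2a : a y x = none := h2.2
            simp [hy', h1a, h2a, arcSwitch]
          · by_cases hx' : x ∈ L'
            · exact absurd hx' hvL'
            · simp [hx', hy']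
        · by_cases hy : y = v
          · subst hy
            by_cases hx' : x ∈ L'
            · have h1 := hemp x y (List.mem_cons_of_mem _ hx') List.mem_cons_self
              have h2 := hemp y x List.mem_cons_self (List.mem_cons_of_mem _ hx')
              have h1a : a x y = none := h1.2
              have h2a : a y x = none := h2.2
              simp [hx', h1a, h2a, arcSwitch]
            · by_cases hy' : y ∈ L'
              · exact absurd hy' hvL'
              · simp [hx', hy']
          · by_cases hx' : x ∈ L' <;> by_cases hy' : y ∈ L' <;>
              simp [hx, hy, hx', hy', List.mem_cons]

lemma mhom_mswitch {V W : Type} [DecidableEq V] [DecidableEq W] {m n : ℕ}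
    {f : V → W} {G : Mixed V m n} {H : Mixed W m n} (hf : MHom f G H)
    (hH : PGood H) (π : SwElt m n) (w : W) (L : List V)
    (hL : ∀ u, u ∈ L ↔ f u = w) :
    MHom f (G.mswitch L π) (H.switch w π) := by
  obtain ⟨hfe, hfa⟩ := hf
  constructor
  · intro u v j h
    simp only [Mixed.mswitch] at h
    simp only [Mixed.switch]
    by_cases hc : u ∈ L ∨ v ∈ L
    · rw [if_pos hc] at h
      have hc2 : f u = w ∨ f v = w := by
        rcases hc with h' | h'
        · exact Or.inl ((hL u).mp h')
        · exact Or.inr ((hL v).mp h')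
      rw [if_pos hc2]
      rcases he : G.edge u v with _ | i
      · simp [he] at h
      · rw [hfe u v i he]
        simpa [he] using h
    · rw [if_neg hc] at h
      have hc2 : ¬ (f u = w ∨ f v = w) := by
        rintro (h' | h')
        · exact hc (Or.inl ((hL u).mpr h'))
        · exact hc (Or.inr ((hL v).mpr h'))
      rw [if_neg hc2]
      exact hfe u v j h
  · intro u v j h
    simp only [Mixed.mswitch] at h
    simp only [Mixed.switch]
    by_cases hc : u ∈ L ∨ v ∈ L
    · rw [if_pos hc] at h
      have hc2 : f u = w ∨ f v = w := by
        rcases hc with h' | h'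
        · exact Or.inl ((hL u).mp h')
        · exact Or.inr ((hL v).mp h')
      rw [if_pos hc2]
      rcases ha : G.arc u v with _ | i
      · rcases hb : G.arc v u with _ | i
        · simp [arcSwitch, ha, hb] at h
        · have hHb : H.arc (f v) (f u) = some i := hfa v u i hb
          have hHa : H.arc (f u) (f v) = none := hH.2.2 _ _ (by simp [hHb])
          simp only [arcSwitch, ha, hb] at h
          simp only [arcSwitch, hHa, hHb]
          exact h
      · have hHa : H.arc (f u) (f v) = some i := hfa u v i ha
        simp only [arcSwitch, ha] at h
        simp only [arcSwitch, hHa]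
        exact h
    · rw [if_neg hc] at h
      have hc2 : ¬ (f u = w ∨ f v = w) := by
        rintro (h' | h')
        · exact hc (Or.inl ((hL u).mpr h'))
        · exact hc (Or.inr ((hL v).mpr h'))
      rw [if_neg hc2]
      exact hfa u v j h

lemma switchSeq_append {V : Type} [DecidableEq V] {m n : ℕ} :
    ∀ (L1 L2 : List (V × SwElt m n)) (G : Mixed V m n),
    G.switchSeq (L1 ++ L2) = (G.switchSeq L1).switchSeq L2 := by
  intro L1
  induction L1 with
  | nil => intro L2 G; rfl
  | cons p L1' ih =>
    intro L2 G
    cases p with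
    | mk v π => simp only [List.cons_append, List.append_eq, Mixed.switchSeq, ih]

lemma mhom_switchSeq {V W : Type} [Fintype V] [DecidableEq V] [DecidableEq W] {m n : ℕ}
    (Γ : Subgroup (SwElt m n)) (hΓ : ∀ p ∈ Γ, Consistent p.2) (f : V → W) :
    ∀ (M : List (W × SwElt m n)), MValid Γ M →
    ∀ (G : Mixed V m n) (H : Mixed W m n), MHom f G H → PGood H →
    ∃ L, MValid Γ L ∧ MHom f (G.switchSeq L) (H.switchSeq M) := by
  intro M
  induction M with
  | nil =>
    intro _ G H hf _
    exact ⟨[], fun p hp => absurd hp List.not_mem_nil, hf⟩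
  | cons q M' ih =>
    intro hM G H hf hH
    obtain ⟨w, π⟩ := q
    have hπΓ : π ∈ Γ := hM (w, π) List.mem_cons_self
    have hπ : Consistent π.2 := hΓ π hπΓ
    set Lw : List V := (Finset.univ.filter (fun u => f u = w)).toList with hLw
    have hmemLw : ∀ u, u ∈ Lw ↔ f u = w := by
      intro u; simp [hLw]
    have hemp : ∀ x y, x ∈ Lw → y ∈ Lw → G.edge x y = none ∧ G.arc x y = none := by
      intro x y hx hy
      have hfx : f x = w := (hmemLw x).mp hx
      have hfy : f y = w := (hmemLw y).mp hy
      constructor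
      · rcases he : G.edge x y with _ | j
        · rfl
        · have := hf.1 x y j he
          rw [hfx, hfy] at this
          rw [hH.1 w] at this
          exact absurd this (by simp)
      · rcases ha : G.arc x y with _ | j
        · rfl
        · have := hf.2 x y j ha
          rw [hfx, hfy] at this
          rw [hH.2.1 w] at this
          exact absurd this (by simp)
    have hnd : Lw.Nodup := Finset.nodup_toList _
    have heq := switchSeq_eq_mswitch π Lw G hnd hemp
    have hf2 : MHom f (G.switchSeq (Lw.map (fun u => (u, π)))) (H.switch w π) := by
      rw [heq]
      exact mhom_mswitch ⟨hf.1, hf.2⟩ hH π w Lw hmemLw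
    have hH2 : PGood (H.switch w π) := pgood_switch hH hπ w
    have hM' : MValid Γ M' := fun p hp => hM p (List.mem_cons_of_mem _ hp)
    obtain ⟨L1, hL1v, hL1⟩ := ih hM' _ _ hf2 hH2
    refine ⟨Lw.map (fun u => (u, π)) ++ L1, ?_, ?_⟩
    · intro p hp
      rcases List.mem_append.mp hp with h' | h'
      · obtain ⟨u, _, rfl⟩ := List.mem_map.mp h'
        exact hπΓ
      · exact hL1v p h'
    · rw [switchSeq_append]
      exact hL1

/-- `Γ`-switchable homomorphisms compose. -/
theorem swhom_comp {V W U : Type} [Fintype V] [DecidableEq V] [Fintype W] [DecidableEq W]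
    {m n : ℕ} (Γ : Subgroup (SwElt m n)) (hΓ : ∀ p ∈ Γ, Consistent p.2)
    (G : Mixed V m n) (H : Mixed W m n) (K : Mixed U m n)
    (hG : G.Proper) (hH : H.Proper) (hK : K.Proper)
    (h1 : MSwHom Γ G H) (h2 : MSwHom Γ H K) :
    MSwHom Γ G K := by
  obtain ⟨L, hLv, f, hf⟩ := h1
  obtain ⟨M, hMv, g, hg⟩ := h2
  have hHgood : PGood H := ⟨hH.1, hH.2.1, hH.2.2.2.2⟩
  obtain ⟨L1, hL1v, hL1⟩ := mhom_switchSeq Γ hΓ f M hMv (G.switchSeq L) H hf hHgood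
  refine ⟨L ++ L1, ?_, g ∘ f, ?_, ?_⟩
  · intro p hp
    rcases List.mem_append.mp hp with h' | h'
    · exact hLv p h'
    · exact hL1v p h'
  · intro u v j h
    rw [switchSeq_append] at h
    exact hg.1 _ _ j (hL1.1 u v j h)
  · intro u v j h
    rw [switchSeq_append] at h
    exact hg.2 _ _ j (hL1.2 u v j h)
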